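/- arXiv:2105.04989 — 3 statements merged into one kernel-verified Lean document; each statement's English description precedes it below -/
import Mathlib

section
/- (B. H. Neumann's lemma, separation form) Let G be a group acting on a set X, and let L ⊆ X be a finite set such that every element of L has infinite orbit under G. Then for every finite set E ⊆ X there exists g ∈ G with g·L ∩ E = ∅. -/
open scoped Pointwise
open MulAction Subgroup

theorem neumann_separation {G X : Type*} [Group G] [MulAction G X]
    (L E : Set X) (hL : L.Finite) (hE : E.Finite)
    (horb : ∀ ℓ ∈ L, (MulAction.orbit G ℓ).Infinite) :
    ∃ g : G, Disjoint ((g • ·) '' L) E := by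
  classical
  by_contra hcon
  push_neg at hcon
  -- For each pair (ℓ, e), the set {g | g • ℓ = e} is a coset of stabilizer G ℓ
  set s : Finset (X × X) :=
    (hL.toFinset ×ˢ hE.toFinset).filter (fun p => ∃ g : G, g • p.1 = p.2) with hs
  have hg : ∀ p ∈ s, ∃ g : G, g • p.1 = p.2 := fun p hp => (Finset.mem_filter.mp hp).2
  choose! g₀ hg₀ using hg
  have hcovers : ⋃ p ∈ s, g₀ p • ((stabilizer G p.1 : Subgroup G) : Set G) = Set.univ := by
    ext g
    simp only [Set.mem_iUnion, Set.mem_univ, iff_true]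
    have := hcon g
    rw [Set.not_disjoint_iff] at this
    obtain ⟨e, ⟨ℓ, hℓL, hge⟩, heE⟩ := this
    have hps : (ℓ, e) ∈ s := by
      simp only [hs, Finset.mem_filter, Finset.mem_product, Set.Finite.mem_toFinset]
      exact ⟨⟨hℓL, heE⟩, g, hge⟩
    refine ⟨(ℓ, e), hps, ?_⟩
    have h0 := hg₀ _ hps
    rw [mem_leftCoset_iff, SetLike.mem_coe, mem_stabilizer_iff, mul_smul,
      inv_smul_eq_iff]
    simp only at h0 ⊢
    simp only at hge; rw [hge, h0]
  obtain ⟨p, hps, hfi⟩ := Subgroup.exists_finiteIndex_of_leftCoset_cover hcovers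
  have hℓL : p.1 ∈ L := by
    have := (Finset.mem_product.mp (Finset.mem_filter.mp hps).1).1
    rwa [Set.Finite.mem_toFinset] at this
  have hinf := horb p.1 hℓL
  have := MulAction.index_stabilizer G p.1
  rw [Set.Infinite.ncard hinf] at this
  exact hfi.index_ne_zero this
end

section
/- (B. H. Neumann's lemma, disjointness form) Let G be a group acting on a set X and let L ⊆ X be a finite set all of whose elements have infinite G-orbits. Then there exists an infinite sequence (g_j) in G such that g_i·L ∩ g_j·L = ∅ for all i ≠ j. -/
open Pointwise

theorem neumann_disjoint_sequence {G X : Type*} [Group G] [MulAction G X]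
    (L : Set X) (hL : L.Finite)
    (horb : ∀ ℓ ∈ L, (MulAction.orbit G ℓ).Infinite) :
    ∃ g : ℕ → G, ∀ i j : ℕ, i ≠ j →
      Disjoint ((g i • ·) '' L) ((g j • ·) '' L) := by
  classical
  -- Separation form of Neumann's lemma
  have sep : ∀ E : Finset X, ∃ g : G, ∀ ℓ ∈ L, g • ℓ ∉ E := by
    intro E
    by_contra hcon
    push_neg at hcon
    set g₀ : X × X → G := fun p => if h : ∃ g : G, g • p.1 = p.2 then h.choose else 1 with hg₀def
    have hg₀ : ∀ p : X × X, (∃ g : G, g • p.1 = p.2) → g₀ p • p.1 = p.2 := by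
      intro p h
      simp only [hg₀def, dif_pos h]
      exact h.choose_spec
    set s : Finset (X × X) :=
      (hL.toFinset ×ˢ E).filter (fun p => ∃ g : G, g • p.1 = p.2) with hsdef
    have hcovers : ⋃ p ∈ s,
        (g₀ p) • ((MulAction.stabilizer G p.1 : Subgroup G) : Set G) = Set.univ := by
      rw [Set.eq_univ_iff_forall]
      intro k
      obtain ⟨ℓ, hℓ, hk⟩ := hcon k
      have hmem : (ℓ, k • ℓ) ∈ s := by
        simp only [hsdef, Finset.mem_filter, Finset.mem_product, Set.Finite.mem_toFinset]
        exact ⟨⟨hℓ, hk⟩, k, rfl⟩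
      refine Set.mem_biUnion hmem ?_
      rw [mem_leftCoset_iff, SetLike.mem_coe, MulAction.mem_stabilizer_iff]
      have h := hg₀ (ℓ, k • ℓ) ⟨k, rfl⟩
      simp only at h
      rw [mul_smul]
      exact inv_smul_eq_iff.mpr h.symm
    obtain ⟨p, hps, hfin⟩ := Subgroup.exists_finiteIndex_of_leftCoset_cover hcovers
    have hp1 : p.1 ∈ L := by
      have := (Finset.mem_filter.mp hps).1
      have := (Finset.mem_product.mp this).1
      rwa [Set.Finite.mem_toFinset] at this
    have hfinorb : (MulAction.orbit G p.1).Finite := by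
      haveI := hfin
      haveI : Finite (G ⧸ MulAction.stabilizer G p.1) :=
        Subgroup.finite_quotient_of_finiteIndex
      haveI := Finite.of_equiv _ (MulAction.orbitEquivQuotientStabilizer G p.1).symm
      exact Set.toFinite _
    exact horb p.1 hp1 hfinorb
  choose f hf using sep
  -- recursively build the sequence, accumulating the union of previous images
  let step : G × Finset X → G × Finset X := fun q =>
    (f q.2, q.2 ∪ hL.toFinset.image (f q.2 • ·))
  let P : ℕ → G × Finset X := fun n => step^[n] (f ∅, hL.toFinset.image (f ∅ • ·))
  set g : ℕ → G := fun n => (P n).1 with hg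
  have hPsucc : ∀ n, P (n + 1) = step (P n) := fun n => Function.iterate_succ_apply' step n _
  have hgsucc : ∀ n, g (n + 1) = f (P n).2 := fun n => congrArg Prod.fst (hPsucc n)
  have hP2succ : ∀ n, (P (n + 1)).2 = (P n).2 ∪ hL.toFinset.image (f (P n).2 • ·) :=
    fun n => congrArg Prod.snd (hPsucc n)
  have himg : ∀ n, hL.toFinset.image (g n • ·) ⊆ (P n).2 := by
    intro n
    cases n with
    | zero => simp [P, g]
    | succ m =>
      rw [hgsucc m, hP2succ m]
      exact Finset.subset_union_right
  have hmono : ∀ m n, m ≤ n → (P m).2 ⊆ (P n).2 := by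
    intro m n hmn
    induction n with
    | zero => simp [Nat.le_zero.mp hmn]
    | succ k ih =>
      rcases Nat.lt_or_ge m (k + 1) with h | h
      · refine (ih (Nat.lt_succ_iff.mp h)).trans ?_
        rw [hP2succ k]
        exact Finset.subset_union_left
      · have : m = k + 1 := le_antisymm hmn h
        simp [this]
  have hdisj : ∀ i j, i < j → Disjoint ((g i • ·) '' L) ((g j • ·) '' L) := by
    intro i j hij
    rw [Set.disjoint_right]
    rintro x ⟨ℓ, hℓ, rfl⟩ ⟨ℓ', hℓ', hx⟩
    -- g j • ℓ = g i • ℓ' ∈ (P i).2 ⊆ (P (j-1)).2, but g j = f (P (j-1)).2 avoids it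
    obtain ⟨k, rfl⟩ := Nat.exists_eq_add_of_lt hij
    simp only at hx
    have hin : g i • ℓ' ∈ (P (i + k)).2 := by
      refine hmono i (i + k) (Nat.le_add_right _ _) ?_
      exact himg i (Finset.mem_image_of_mem _ (hL.mem_toFinset.mpr hℓ'))
    rw [hx, hgsucc (i + k)] at hin
    exact hf _ ℓ hℓ hin
  exact ⟨g, fun i j hij => (Nat.lt_or_ge i j).elim (hdisj i j) fun h =>
    (hdisj j i (lt_of_le_of_ne h (Ne.symm hij))).symm⟩
end

section
/- Let G be a group acting on a set X and let K ⊆ X be finite with every element of K having infinite G-orbit. Then for every n there exist g_0, …, g_n ∈ G such that the sets g_0·K, …, g_n·K are pairwise disjoint. -/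
open MulAction Set Pointwise

private lemma sep_lemma {G X : Type*} [Group G] [MulAction G X]
    (K : Set X) (hK : K.Finite) (horb : ∀ k ∈ K, (MulAction.orbit G k).Infinite)
    (E : Set X) (hE : E.Finite) : ∃ g : G, Disjoint ((g • ·) '' K) E := by
  classical
  by_contra hcon
  push_neg at hcon
  -- every g has some k ∈ K, e ∈ E with g • k = e
  have hcov : ∀ g : G, ∃ p : X × X, p.1 ∈ K ∧ p.2 ∈ E ∧ g • p.1 = p.2 := by
    intro g
    obtain ⟨x, hx1, hx2⟩ := Set.not_disjoint_iff.mp (hcon g)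
    obtain ⟨k, hk, rfl⟩ := hx1
    exact ⟨(k, g • k), hk, hx2, rfl⟩
  set s : Finset (X × X) := ((hK.prod hE).toFinset).filter
    (fun p => ∃ g : G, g • p.1 = p.2) with hs
  have hchoice : ∀ p ∈ s, ∃ g : G, g • p.1 = p.2 := fun p hp => (Finset.mem_filter.mp hp).2
  choose! g0 hg0 using hchoice
  have hcovers : ⋃ p ∈ s, (g0 p) • ((MulAction.stabilizer G p.1 : Subgroup G) : Set G)
      = Set.univ := by
    ext g
    simp only [Set.mem_iUnion, Set.mem_univ, iff_true]
    obtain ⟨p, hk, he, hgp⟩ := hcov g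
    have hps : p ∈ s := by
      simp only [hs, Finset.mem_filter, Set.Finite.mem_toFinset, Set.mem_prod]
      exact ⟨⟨hk, he⟩, g, hgp⟩
    refine ⟨p, hps, ?_⟩
    rw [mem_leftCoset_iff, SetLike.mem_coe, MulAction.mem_stabilizer_iff, mul_smul, hgp,
      ← hg0 p hps]
    simp
  obtain ⟨p, hps, hfi⟩ := Subgroup.exists_finiteIndex_of_leftCoset_cover hcovers
  have hk : p.1 ∈ K := by
    have := (Finset.mem_filter.mp hps).1
    rw [Set.Finite.mem_toFinset] at this
    exact this.1
  -- finite index stabilizer → finite orbit, contradiction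
  have : Finite (G ⧸ MulAction.stabilizer G p.1) := @Subgroup.finite_quotient_of_finiteIndex _ _ _ hfi
  have : (MulAction.orbit G p.1).Finite := by
    have e := MulAction.orbitEquivQuotientStabilizer G p.1
    exact Set.finite_coe_iff.mp (Finite.of_equiv _ e.symm)
  exact (horb p.1 hk) this

theorem pairwise_disjoint_translates {G X : Type*} [Group G] [MulAction G X]
    (K : Set X) (hK : K.Finite) (horb : ∀ k ∈ K, (MulAction.orbit G k).Infinite)
    (n : ℕ) :
    ∃ g : Fin (n + 1) → G, ∀ i j : Fin (n + 1), i ≠ j →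
      Disjoint ((g i • ·) '' K) ((g j • ·) '' K) := by
  induction n with
  | zero =>
    exact ⟨fun _ => 1, fun i j hij => absurd (by omega : i = j) hij⟩
  | succ m ih =>
    obtain ⟨g, hg⟩ := ih
    have hEfin : (⋃ i, (g i • ·) '' K).Finite :=
      Set.finite_iUnion (fun i => hK.image _)
    obtain ⟨g', hg'⟩ := sep_lemma K hK horb _ hEfin
    refine ⟨Fin.cons g' g, ?_⟩
    have key : ∀ i : Fin (m + 1), Disjoint ((g' • ·) '' K) ((g i • ·) '' K) :=
      fun i => hg'.mono_right (Set.subset_iUnion (fun i => (g i • ·) '' K) i)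
    intro i j
    induction i using Fin.cases with
    | zero =>
      induction j using Fin.cases with
      | zero => exact fun hij => absurd rfl hij
      | succ j' => exact fun _ => by simpa using key j'
    | succ i' =>
      induction j using Fin.cases with
      | zero => exact fun _ => by simpa using (key i').symm
      | succ j' =>
        intro hij
        have : i' ≠ j' := fun h => hij (by rw [h])
        simpa using hg i' j' this
end
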